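/- As the regularization coefficient λ → +∞, the minimizer P_λ of the entropic regularized OT problem converges to the product measure μ ⊗ ν. -/

import Mathlib

open Real Filter

lemma klA {s : ℝ} (hs : 0 < s) (hs1 : s ≤ 1) :
    (1 - s)^2 / 4 ≤ s * Real.log s - s + 1 := by
  set r := Real.sqrt s with hr
  have hr0 : 0 < r := Real.sqrt_pos.mpr hs
  have hr2 : r ^ 2 = s := Real.sq_sqrt hs.le
  have hr1 : r ≤ 1 := by nlinarith
  have hlog : Real.log r ≥ 1 - r⁻¹ := by
    have := Real.log_le_sub_one_of_pos (inv_pos.mpr hr0)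
    rw [Real.log_inv] at this
    linarith
  have hls : Real.log s = 2 * Real.log r := by
    rw [← hr2, Real.log_pow]; push_cast; ring
  have hkey : s * Real.log s ≥ 2 * s - 2 * r := by
    rw [hls]
    have h1 : s * Real.log r ≥ s * (1 - r⁻¹) :=
      mul_le_mul_of_nonneg_left hlog hs.le
    have h2 : s * r⁻¹ = r := by
      rw [← hr2]; field_simp
    nlinarith
  nlinarith [sq_nonneg (1 - r), sq_nonneg ((1-r)*(1+r))]

lemma klB {t : ℝ} (ht : 0 < t) (ht1 : t ≤ 1) :
    (1 - t)^2 / 4 ≤ -Real.log t - 1 + t := by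
  set r := Real.sqrt t with hr
  have hr0 : 0 < r := Real.sqrt_pos.mpr ht
  have hr2 : r ^ 2 = t := Real.sq_sqrt ht.le
  have hr1 : r ≤ 1 := by nlinarith
  have hlog : Real.log r ≤ r - 1 := Real.log_le_sub_one_of_pos hr0
  have hls : Real.log t = 2 * Real.log r := by
    rw [← hr2, Real.log_pow]; push_cast; ring
  nlinarith [sq_nonneg ((1-r)*(1+r))]

lemma klPoint {p q : ℝ} (hp : 0 < p) (hp1 : p ≤ 1) (hq : 0 ≤ q) (hq1 : q ≤ 1) :
    (q - p)^2 / 4 ≤ q * Real.log q - q * Real.log p - q + p := by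
  rcases eq_or_lt_of_le hq with h0 | hqpos
  · rw [← h0]; simp; nlinarith
  rcases le_or_gt q p with hle | hlt
  · have hs : 0 < q / p := div_pos hqpos hp
    have hs1 : q / p ≤ 1 := (div_le_one hp).mpr hle
    have := klA hs hs1
    have hld : Real.log (q / p) = Real.log q - Real.log p :=
      Real.log_div (ne_of_gt hqpos) (ne_of_gt hp)
    rw [hld] at this
    have hmul := mul_le_mul_of_nonneg_left this hp.le
    have h1 : p * ((1 - q/p)^2/4) = (p - q)^2 / (4 * p) := by
      field_simp
    have h2 : p * (q / p * (Real.log q - Real.log p) - q / p + 1)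
        = q * Real.log q - q * Real.log p - q + p := by
      field_simp
    rw [h1, h2] at hmul
    have : (q - p)^2 / 4 ≤ (p - q)^2 / (4 * p) := by
      rw [div_le_div_iff₀ (by norm_num) (by positivity)]
      nlinarith [sq_nonneg (q - p)]
    linarith
  · have ht : 0 < p / q := div_pos hp hqpos
    have ht1 : p / q ≤ 1 := (div_le_one hqpos).mpr hlt.le
    have := klB ht ht1
    have hld : Real.log (p / q) = Real.log p - Real.log q :=
      Real.log_div (ne_of_gt hp) (ne_of_gt hqpos)
    rw [hld] at this
    have hmul := mul_le_mul_of_nonneg_left this hqpos.le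
    have h1 : q * ((1 - p/q)^2/4) = (q - p)^2 / (4 * q) := by
      field_simp
    have h2 : q * (-(Real.log p - Real.log q) - 1 + p / q)
        = q * Real.log q - q * Real.log p - q + p := by
      field_simp; ring
    rw [h1, h2] at hmul
    have : (q - p)^2 / 4 ≤ (q - p)^2 / (4 * q) := by
      rw [div_le_div_iff₀ (by norm_num) (by positivity)]
      nlinarith [sq_nonneg (q - p)]
    linarith

/-- As λ → +∞, the minimizer of the entropic regularized OT problem
converges entrywise to the product coupling `μ νᵀ`. -/
theorem entropic_ot_tendsto_product (n m : ℕ) (μ : Fin n → ℝ) (ν : Fin m → ℝ)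
    (hμ : ∀ i, 0 < μ i) (hν : ∀ j, 0 < ν j)
    (hμ1 : ∑ i, μ i = 1) (hν1 : ∑ j, ν j = 1)
    (C : Matrix (Fin n) (Fin m) ℝ)
    (P : ℝ → Matrix (Fin n) (Fin m) ℝ)
    (hfeas : ∀ lam : ℝ, 0 < lam →
      (∀ i j, 0 ≤ P lam i j) ∧ (∀ i, ∑ j, P lam i j = μ i) ∧
      (∀ j, ∑ i, P lam i j = ν j))
    (hmin : ∀ lam : ℝ, 0 < lam → ∀ Q : Matrix (Fin n) (Fin m) ℝ,
      (∀ i j, 0 ≤ Q i j) → (∀ i, ∑ j, Q i j = μ i) → (∀ j, ∑ i, Q i j = ν j) →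
      (∑ i, ∑ j, C i j * P lam i j)
          - lam * (-∑ i, ∑ j, P lam i j * (Real.log (P lam i j) - 1))
        ≤ (∑ i, ∑ j, C i j * Q i j)
          - lam * (-∑ i, ∑ j, Q i j * (Real.log (Q i j) - 1))) :
    ∀ i j, Filter.Tendsto (fun lam => P lam i j) Filter.atTop (nhds (μ i * ν j)) := by
  -- basic facts
  have hμ1' : ∀ i, μ i ≤ 1 := by
    intro i
    rw [← hμ1]
    exact Finset.single_le_sum (fun k _ => (hμ k).le) (Finset.mem_univ i)
  have hν1' : ∀ j, ν j ≤ 1 := by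
    intro j
    rw [← hν1]
    exact Finset.single_le_sum (fun k _ => (hν k).le) (Finset.mem_univ j)
  -- product coupling
  set Qp : Matrix (Fin n) (Fin m) ℝ := Matrix.of fun i j => μ i * ν j with hQp
  have hQp0 : ∀ i j, 0 ≤ Qp i j := fun i j => mul_nonneg (hμ i).le (hν j).le
  have hQpr : ∀ i, ∑ j, Qp i j = μ i := by
    intro i; simp only [hQp, Matrix.of_apply, ← Finset.mul_sum, hν1, mul_one]
  have hQpc : ∀ j, ∑ i, Qp i j = ν j := by
    intro j; simp only [hQp, Matrix.of_apply, ← Finset.sum_mul, hμ1, one_mul]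
  set B : ℝ := ∑ i, ∑ j, |C i j| with hB
  have hB0 : 0 ≤ B := by positivity
  intro i₀ j₀
  -- key quantitative bound
  have key : ∀ lam : ℝ, 0 < lam →
      |P lam i₀ j₀ - μ i₀ * ν j₀| ≤ Real.sqrt (8 * B / lam) := by
    intro lam hl
    obtain ⟨hP0, hPr, hPc⟩ := hfeas lam hl
    have hP1 : ∀ i j, P lam i j ≤ 1 := by
      intro i j
      calc P lam i j ≤ ∑ j', P lam i j' :=
            Finset.single_le_sum (fun k _ => hP0 i k) (Finset.mem_univ j)
        _ = μ i := hPr i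
        _ ≤ 1 := hμ1' i
    have hPsum : ∑ i, ∑ j, P lam i j = 1 := by
      simp only [hPr, hμ1]
    have hQpsum : ∑ i, ∑ j, Qp i j = 1 := by
      simp only [hQpr, hμ1]
    set SP : ℝ := ∑ i, ∑ j, P lam i j * Real.log (P lam i j) with hSP
    set K : ℝ := (∑ i, μ i * Real.log (μ i)) + (∑ j, ν j * Real.log (ν j)) with hK
    -- entropy of product equals K
    have hSQp : ∑ i, ∑ j, Qp i j * Real.log (Qp i j) = K := by
      have hrow : ∀ i, ∑ j, Qp i j * Real.log (Qp i j)
          = μ i * Real.log (μ i) + μ i * (∑ j, ν j * Real.log (ν j)) := by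
        intro i
        have : ∀ j, Qp i j * Real.log (Qp i j)
            = μ i * Real.log (μ i) * ν j + μ i * (ν j * Real.log (ν j)) := by
          intro j
          simp only [hQp, Matrix.of_apply]
          rw [Real.log_mul (ne_of_gt (hμ i)) (ne_of_gt (hν j))]
          ring
        rw [Finset.sum_congr rfl (fun j _ => this j), Finset.sum_add_distrib,
          ← Finset.mul_sum, ← Finset.mul_sum, hν1, mul_one]
      rw [Finset.sum_congr rfl (fun i _ => hrow i), Finset.sum_add_distrib,
        ← Finset.sum_mul, hμ1, one_mul, hK]
    -- marginal identity for P
    have margP : ∑ i, ∑ j, P lam i j * (Real.log (μ i) + Real.log (ν j)) = K := by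
      have h1 : ∑ i, ∑ j, P lam i j * Real.log (μ i) = ∑ i, μ i * Real.log (μ i) := by
        refine Finset.sum_congr rfl (fun i _ => ?_)
        rw [← Finset.sum_mul, hPr i]
      have h2 : ∑ i, ∑ j, P lam i j * Real.log (ν j) = ∑ j, ν j * Real.log (ν j) := by
        rw [Finset.sum_comm]
        refine Finset.sum_congr rfl (fun j _ => ?_)
        rw [← Finset.sum_mul, hPc j]
      calc ∑ i, ∑ j, P lam i j * (Real.log (μ i) + Real.log (ν j))
          = (∑ i, ∑ j, P lam i j * Real.log (μ i))
            + ∑ i, ∑ j, P lam i j * Real.log (ν j) := by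
            simp only [mul_add, Finset.sum_add_distrib]
        _ = K := by rw [h1, h2, hK]
    -- KL term bound
    set T : Fin n → Fin m → ℝ := fun i j =>
      P lam i j * Real.log (P lam i j)
        - P lam i j * (Real.log (μ i) + Real.log (ν j)) - P lam i j + μ i * ν j with hT
    have hTpoint : ∀ i j,
        (P lam i j - μ i * ν j)^2 / 4 ≤ T i j := by
      intro i j
      have hp : 0 < μ i * ν j := mul_pos (hμ i) (hν j)
      have hp1 : μ i * ν j ≤ 1 :=
        mul_le_one₀ (hμ1' i) (hν j).le (hν1' j)
      have := klPoint hp hp1 (hP0 i j) (hP1 i j)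
      rw [Real.log_mul (ne_of_gt (hμ i)) (ne_of_gt (hν j))] at this
      simpa [hT] using this
    have hT0 : ∀ i j, 0 ≤ T i j := fun i j =>
      le_trans (by positivity) (hTpoint i j)
    have hTsum : ∑ i, ∑ j, T i j = SP - K := by
      simp only [hT, Finset.sum_sub_distrib, Finset.sum_add_distrib]
      rw [margP, hPsum]
      have : ∑ i, ∑ j, μ i * ν j = 1 := by
        simpa [hQp] using hQpsum
      rw [this]
      ring_nf
      linarith [hSP]
    have hKL : (P lam i₀ j₀ - μ i₀ * ν j₀)^2 / 4 ≤ SP - K := by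
      rw [← hTsum]
      calc (P lam i₀ j₀ - μ i₀ * ν j₀)^2 / 4 ≤ T i₀ j₀ := hTpoint i₀ j₀
        _ ≤ ∑ j, T i₀ j :=
            Finset.single_le_sum (fun k _ => hT0 i₀ k) (Finset.mem_univ j₀)
        _ ≤ ∑ i, ∑ j, T i j :=
            Finset.single_le_sum
              (fun k _ => Finset.sum_nonneg (fun j _ => hT0 k j)) (Finset.mem_univ i₀)
    -- cost bounds
    have hFbound : ∀ Q : Matrix (Fin n) (Fin m) ℝ, (∀ i j, 0 ≤ Q i j) →
        (∀ i j, Q i j ≤ 1) → |∑ i, ∑ j, C i j * Q i j| ≤ B := by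
      intro Q hQ0 hQ1
      calc |∑ i, ∑ j, C i j * Q i j| ≤ ∑ i, |∑ j, C i j * Q i j| :=
            Finset.abs_sum_le_sum_abs _ _
        _ ≤ ∑ i, ∑ j, |C i j * Q i j| :=
            Finset.sum_le_sum (fun i _ => Finset.abs_sum_le_sum_abs _ _)
        _ ≤ B := by
            rw [hB]
            refine Finset.sum_le_sum (fun i _ => Finset.sum_le_sum (fun j _ => ?_))
            rw [abs_mul, abs_of_nonneg (hQ0 i j)]
            calc |C i j| * Q i j ≤ |C i j| * 1 :=
                  mul_le_mul_of_nonneg_left (hQ1 i j) (abs_nonneg _)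
              _ = |C i j| := mul_one _
    have hQp1 : ∀ i j, Qp i j ≤ 1 := fun i j =>
      mul_le_one₀ (hμ1' i) (hν j).le (hν1' j)
    -- use minimality
    have hmin' := hmin lam hl Qp hQp0 hQpr hQpc
    have hEP : ∑ i, ∑ j, P lam i j * (Real.log (P lam i j) - 1) = SP - 1 := by
      simp only [mul_sub, mul_one, Finset.sum_sub_distrib]
      rw [hPsum, hSP]
    have hEQ : ∑ i, ∑ j, Qp i j * (Real.log (Qp i j) - 1) = K - 1 := by
      simp only [mul_sub, mul_one, Finset.sum_sub_distrib]
      rw [hQpsum, hSQp]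
    rw [hEP, hEQ] at hmin'
    have hgap : lam * (SP - K) ≤ 2 * B := by
      have h1 : |∑ i, ∑ j, C i j * P lam i j| ≤ B := hFbound _ hP0 hP1
      have h2 : |∑ i, ∑ j, C i j * Qp i j| ≤ B := hFbound _ hQp0 hQp1
      have := abs_le.mp h1
      have := abs_le.mp h2
      nlinarith [abs_le.mp h1, abs_le.mp h2]
    -- conclude
    have hsq : (P lam i₀ j₀ - μ i₀ * ν j₀)^2 ≤ 8 * B / lam := by
      have hSPK : SP - K ≤ 2 * B / lam := by
        rw [le_div_iff₀ hl]; linarith [hgap]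
      calc (P lam i₀ j₀ - μ i₀ * ν j₀)^2
          = 4 * ((P lam i₀ j₀ - μ i₀ * ν j₀)^2 / 4) := by ring
        _ ≤ 4 * (SP - K) := by linarith [hKL]
        _ ≤ 4 * (2 * B / lam) := by linarith [hSPK]
        _ = 8 * B / lam := by ring
    exact Real.abs_le_sqrt hsq
  -- limit of the bound
  have hlim : Tendsto (fun lam : ℝ => Real.sqrt (8 * B / lam)) atTop (nhds 0) := by
    have h1 : Tendsto (fun lam : ℝ => 8 * B / lam) atTop (nhds 0) := by
      simpa using tendsto_const_nhds.div_atTop (tendsto_id (α := ℝ))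
    have h2 := (Real.continuous_sqrt.tendsto 0).comp h1
    rw [Real.sqrt_zero] at h2
    exact h2
  have hzero : Tendsto (fun lam => P lam i₀ j₀ - μ i₀ * ν j₀) atTop (nhds 0) := by
    apply squeeze_zero_norm' _ hlim
    filter_upwards [eventually_gt_atTop (0 : ℝ)] with lam hl
    simpa [Real.norm_eq_abs] using key lam hl
  have := hzero.add_const (μ i₀ * ν j₀)
  simpa using this
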